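/- For T admitting an A-adjoint and α ∈ [0,1], ‖T‖_{A,α}² ≤ ‖(1−α)T^{♯A}T + α TT^{♯A}‖_A. Consequently, w_A(T)² ≤ min over α ∈ [0,1] of ‖α T^{♯A}T + (1−α)TT^{♯A}‖_A. -/

import Mathlib

open scoped ComplexOrder
open ContinuousLinearMap Filter Topology

set_option maxHeartbeats 1000000
set_option synthInstance.maxHeartbeats 400000

variable {H : Type*} [NormedAddCommGroup H] [InnerProductSpace ℂ H] [CompleteSpace H]

/-- The A-semi-inner product `⟨x, y⟩_A = ⟨A x, y⟩` (Mathlib convention: conjugate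
linear in the first variable). -/
noncomputable def aInner (A : H →L[ℂ] H) (x y : H) : ℂ := inner ℂ (A x) y

/-- The A-seminorm `‖x‖_A = sqrt ⟨x, x⟩_A`. -/
noncomputable def aNorm (A : H →L[ℂ] H) (x : H) : ℝ := Real.sqrt (aInner A x x).re

/-- `T` is A-bounded. -/
def ABounded (A T : H →L[ℂ] H) : Prop := ∃ c > 0, ∀ x, aNorm A (T x) ≤ c * aNorm A x

/-- The A-operator seminorm. -/
noncomputable def opNormA (A T : H →L[ℂ] H) : ℝ :=
  sSup {r | ∃ x ∈ closure (Set.range A), aNorm A x = 1 ∧ r = aNorm A (T x)}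

/-- The A-numerical radius. -/
noncomputable def wA (A T : H →L[ℂ] H) : ℝ :=
  sSup {r | ∃ x, aNorm A x = 1 ∧ r = ‖aInner A (T x) x‖}

/-- The A-Crawford number. -/
noncomputable def cA (A T : H →L[ℂ] H) : ℝ :=
  sInf {r | ∃ x, aNorm A x = 1 ∧ r = ‖aInner A (T x) x‖}

/-- The `A_α`-seminorm `‖T‖_{A,α}`. -/
noncomputable def alphaNorm (A T : H →L[ℂ] H) (α : ℝ) : ℝ :=
  sSup {r | ∃ x, aNorm A x = 1 ∧
    r = Real.sqrt (α * ‖aInner A (T x) x‖ ^ 2 + (1 - α) * aNorm A (T x) ^ 2)}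

/-- `S` is the A-adjoint `T^{♯_A}` of `T`: the solution of `A X = T* A` whose
range lies in the closure of the range of `A`. -/
def IsAAdjoint (A T S : H →L[ℂ] H) : Prop :=
  A ∘L S = (ContinuousLinearMap.adjoint T) ∘L A ∧ ∀ x, S x ∈ closure (Set.range A)

section Helpers

lemma sa_inner {A : H →L[ℂ] H} (hA : IsSelfAdjoint A) (u v : H) :
    (inner ℂ (A u) v : ℂ) = inner ℂ u (A v) := by
  rw [← ContinuousLinearMap.adjoint_inner_left, hA.adjoint_eq]

lemma bsq_inner {A B : H →L[ℂ] H} (hBsa : IsSelfAdjoint B) (hBB : B ∘L B = A) (u v : H) :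
    (inner ℂ (A u) v : ℂ) = inner ℂ (B u) (B v) := by
  have : A u = B (B u) := by rw [← hBB]; rfl
  rw [this, sa_inner hBsa]

lemma inner_self_re (u : H) : (inner ℂ u u : ℂ).re = ‖u‖ ^ 2 := by
  simpa using inner_self_eq_norm_sq (𝕜 := ℂ) u

lemma norm_B_sq {A B : H →L[ℂ] H} (hBsa : IsSelfAdjoint B) (hBB : B ∘L B = A) (u : H) :
    ‖B u‖ ^ 2 = (inner ℂ (A u) u : ℂ).re := by
  rw [bsq_inner hBsa hBB, inner_self_re]

lemma aNorm_eq {A B : H →L[ℂ] H} (hBsa : IsSelfAdjoint B) (hBB : B ∘L B = A) (u : H) :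
    aNorm A u = ‖B u‖ := by
  rw [aNorm, aInner, ← norm_B_sq hBsa hBB, Real.sqrt_sq (norm_nonneg _)]

/-- Step inequality: for `A`-selfadjoint `Q`, `‖B (Q v)‖² ≤ ‖B (Q (Q v))‖ * ‖B v‖`. -/
lemma step_ineq {A B : H →L[ℂ] H} (hBsa : IsSelfAdjoint B) (hBB : B ∘L B = A)
    {Q : H →L[ℂ] H} (hQ : A ∘L Q = adjoint Q ∘L A) (v : H) :
    ‖B (Q v)‖ ^ 2 ≤ ‖B (Q (Q v))‖ * ‖B v‖ := by
  have e1 : (inner ℂ (B (Q v)) (B (Q v)) : ℂ) = inner ℂ (B v) (B (Q (Q v))) := by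
    rw [← bsq_inner hBsa hBB (Q v) (Q v)]
    have hA : A (Q v) = adjoint Q (A v) := by
      have := congrArg (fun f : H →L[ℂ] H => f v) hQ
      simpa using this
    rw [hA, ContinuousLinearMap.adjoint_inner_left, bsq_inner hBsa hBB]
  calc ‖B (Q v)‖ ^ 2 = (inner ℂ (B (Q v)) (B (Q v)) : ℂ).re := (inner_self_re _).symm
    _ = (inner ℂ (B v) (B (Q (Q v))) : ℂ).re := by rw [e1]
    _ ≤ ‖(inner ℂ (B v) (B (Q (Q v))) : ℂ)‖ := Complex.re_le_norm _
    _ ≤ ‖B v‖ * ‖B (Q (Q v))‖ := norm_inner_le_norm _ _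
    _ = ‖B (Q (Q v))‖ * ‖B v‖ := mul_comm _ _

lemma pow_Asa {A R : H →L[ℂ] H} (hR : A ∘L R = adjoint R ∘L A) (n : ℕ) :
    A ∘L R ^ n = adjoint (R ^ n) ∘L A := by
  induction n with
  | zero =>
    have h1 : adjoint (1 : H →L[ℂ] H) = 1 := by
      rw [← ContinuousLinearMap.star_eq_adjoint, star_one]
    rw [pow_zero, h1]; ext v; simp
  | succ n ih =>
    have h2 : adjoint (R ^ (n + 1)) = (adjoint (R ^ n)) ∘L adjoint R := by
      rw [pow_succ']
      exact ContinuousLinearMap.adjoint_comp _ _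
    have h1 : (R : H →L[ℂ] H) ^ (n + 1) = (R ^ n) ∘L R := by rw [pow_succ]; rfl
    rw [h2, h1, ← ContinuousLinearMap.comp_assoc, ih, ContinuousLinearMap.comp_assoc, hR,
      ← ContinuousLinearMap.comp_assoc]

/-- The key seminorm bound: `‖B (R y)‖ ≤ ‖R‖ * ‖B y‖` for `A`-selfadjoint `R`. -/
lemma normBound {A B : H →L[ℂ] H} (hBsa : IsSelfAdjoint B) (hBB : B ∘L B = A)
    {R : H →L[ℂ] H} (hR : A ∘L R = adjoint R ∘L A) (y : H) :
    ‖B (R y)‖ ≤ ‖R‖ * ‖B y‖ := by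
  set c := ‖B y‖ with hc
  set L := ‖B (R y)‖ with hL
  -- iterate
  have hiter : ∀ n : ℕ, L ^ (2 ^ n) ≤ c ^ (2 ^ n - 1) * ‖B ((R ^ (2 ^ n)) y)‖ := by
    intro n
    induction n with
    | zero => simp [hL]
    | succ n ih =>
      have h2n : 1 ≤ 2 ^ n := Nat.one_le_two_pow
      have hQ : A ∘L R ^ (2 ^ n) = adjoint (R ^ (2 ^ n)) ∘L A := pow_Asa hR _
      have hstep := step_ineq hBsa hBB hQ y
      have hsqapp : (R ^ (2 ^ n)) ((R ^ (2 ^ n)) y) = (R ^ (2 ^ (n + 1))) y := by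
        have h : (R : H →L[ℂ] H) ^ (2 ^ (n + 1)) = (R ^ (2 ^ n)) * (R ^ (2 ^ n)) := by
          rw [pow_succ 2 n, pow_mul, pow_two]
        rw [h]; rfl
      rw [hsqapp] at hstep
      have hnn1 : (0:ℝ) ≤ c ^ (2 ^ n - 1) * ‖B ((R ^ (2 ^ n)) y)‖ := by positivity
      calc L ^ 2 ^ (n + 1) = (L ^ 2 ^ n) ^ 2 := by
            rw [← pow_mul, pow_succ]
        _ ≤ (c ^ (2 ^ n - 1) * ‖B ((R ^ (2 ^ n)) y)‖) ^ 2 := by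
            apply pow_le_pow_left₀ (by positivity) ih
        _ = c ^ (2 ^ n - 1) * c ^ (2 ^ n - 1) * ‖B ((R ^ (2 ^ n)) y)‖ ^ 2 := by ring
        _ ≤ c ^ (2 ^ n - 1) * c ^ (2 ^ n - 1) * (‖B ((R ^ (2 ^ (n+1))) y)‖ * c) := by
            apply mul_le_mul_of_nonneg_left hstep (by positivity)
        _ = c ^ ((2 ^ n - 1) + (2 ^ n - 1) + 1) * ‖B ((R ^ (2 ^ (n+1))) y)‖ := by
            rw [pow_add, pow_add, pow_one]; ring
        _ = c ^ (2 ^ (n + 1) - 1) * ‖B ((R ^ (2 ^ (n+1))) y)‖ := by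
            congr 2
            have : 2 ^ (n + 1) = 2 ^ n + 2 ^ n := by rw [pow_succ]; ring
            omega
  have key : ∀ n : ℕ, L ^ (2 ^ n) ≤ c ^ (2 ^ n - 1) * (‖B‖ * (‖R‖ ^ (2 ^ n) * ‖y‖)) := by
    intro n
    refine (hiter n).trans (mul_le_mul_of_nonneg_left ?_ (by positivity))
    calc ‖B ((R ^ (2 ^ n)) y)‖ ≤ ‖B‖ * ‖(R ^ (2 ^ n)) y‖ := ContinuousLinearMap.le_opNorm _ _
      _ ≤ ‖B‖ * (‖R ^ (2 ^ n)‖ * ‖y‖) := by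
          apply mul_le_mul_of_nonneg_left _ (norm_nonneg _)
          exact ContinuousLinearMap.le_opNorm _ _
      _ ≤ ‖B‖ * (‖R‖ ^ (2 ^ n) * ‖y‖) := by
          apply mul_le_mul_of_nonneg_left _ (norm_nonneg _)
          exact mul_le_mul_of_nonneg_right (norm_pow_le' R (pow_pos two_pos n)) (norm_nonneg _)
  by_contra hcon
  push_neg at hcon
  -- hcon : ‖R‖ * c < L
  have hc0 : 0 ≤ c := norm_nonneg _
  have hL0 : 0 < L := lt_of_le_of_lt (by positivity) hcon
  rcases eq_or_lt_of_le hc0 with hc0' | hcpos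
  · -- c = 0
    have hst := step_ineq hBsa hBB hR y
    have hby : ‖B y‖ = 0 := by rw [← hc, ← hc0']
    rw [hby, mul_zero] at hst
    have hL' : L = ‖B (R y)‖ := hL
    nlinarith [norm_nonneg (B (R y))]
  · have hR0 : 0 < ‖R‖ := by
      by_contra hR0
      push_neg at hR0
      have hR0' : ‖R‖ = 0 := le_antisymm hR0 (norm_nonneg _)
      have := key 0
      simp [hR0'] at this
      nlinarith
    set t := L / (‖R‖ * c) with ht
    have htpos : 0 < ‖R‖ * c := by positivity
    have ht1 : 1 < t := (one_lt_div htpos).mpr hcon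
    set K := ‖B‖ * ‖y‖ / c with hK
    have htn : ∀ n : ℕ, t ^ (2 ^ n) ≤ K := by
      intro n
      rw [ht, div_pow, hK, div_le_div_iff₀ (by positivity) hcpos]
      calc L ^ 2 ^ n * c ≤ (c ^ (2 ^ n - 1) * (‖B‖ * (‖R‖ ^ (2 ^ n) * ‖y‖))) * c :=
            mul_le_mul_of_nonneg_right (key n) hc0
        _ = ‖B‖ * ‖y‖ * (‖R‖ ^ (2 ^ n) * (c ^ (2 ^ n - 1) * c)) := by ring
        _ = ‖B‖ * ‖y‖ * (‖R‖ * c) ^ 2 ^ n := by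
            rw [mul_pow]
            congr 2
            rw [← pow_succ]
            congr 1
            have : 1 ≤ 2 ^ n := Nat.one_le_two_pow
            omega
    obtain ⟨m, hm⟩ := pow_unbounded_of_one_lt K ht1
    have h1 : t ^ m ≤ t ^ (2 ^ m) := pow_le_pow_right₀ ht1.le (Nat.lt_two_pow_self (n := m)).le
    linarith [htn m]

end Helpers


lemma re_ofReal_mul' (a : ℝ) (z : ℂ) : ((a : ℂ) * z).re = a * z.re := by simp

lemma inner_real_smul_left' (a : ℝ) (u v : H) : (inner ℂ (a • u) v : ℂ) = (a : ℂ) * inner ℂ u v := by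
  rw [RCLike.real_smul_eq_coe_smul (K := ℂ), inner_smul_left, RCLike.conj_ofReal]
  norm_cast

section Main

variable {A T S : H →L[ℂ] H}

lemma hAS_pt (hT : IsAAdjoint A T S) (u : H) : A (S u) = adjoint T (A u) := by
  have := congrArg (fun f : H →L[ℂ] H => f u) hT.1
  simpa using this

lemma hSA (hA : A.IsPositive) (hT : IsAAdjoint A T S) :
    (adjoint S) ∘L A = A ∘L T := by
  have := congrArg adjoint hT.1
  rwa [ContinuousLinearMap.adjoint_comp, ContinuousLinearMap.adjoint_comp,
    ContinuousLinearMap.adjoint_adjoint, hA.isSelfAdjoint.adjoint_eq] at this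

lemma hAR_comp (hA : A.IsPositive) (hT : IsAAdjoint A T S) (a b : ℝ) :
    A ∘L (a • (S ∘L T) + b • (T ∘L S)) =
      adjoint (a • (S ∘L T) + b • (T ∘L S)) ∘L A := by
  have hST : A ∘L (S ∘L T) = adjoint (S ∘L T) ∘L A := by
    rw [ContinuousLinearMap.adjoint_comp]
    calc A ∘L (S ∘L T) = (A ∘L S) ∘L T := by rw [ContinuousLinearMap.comp_assoc]
      _ = (adjoint T ∘L A) ∘L T := by rw [hT.1]
      _ = adjoint T ∘L (A ∘L T) := by rw [ContinuousLinearMap.comp_assoc]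
      _ = adjoint T ∘L (adjoint S ∘L A) := by rw [← hSA hA hT]
      _ = (adjoint T ∘L adjoint S) ∘L A := by rw [ContinuousLinearMap.comp_assoc]
  have hTS : A ∘L (T ∘L S) = adjoint (T ∘L S) ∘L A := by
    rw [ContinuousLinearMap.adjoint_comp]
    calc A ∘L (T ∘L S) = (A ∘L T) ∘L S := by rw [ContinuousLinearMap.comp_assoc]
      _ = (adjoint S ∘L A) ∘L S := by rw [← hSA hA hT]
      _ = adjoint S ∘L (A ∘L S) := by rw [ContinuousLinearMap.comp_assoc]
      _ = adjoint S ∘L (adjoint T ∘L A) := by rw [hT.1]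
      _ = (adjoint S ∘L adjoint T) ∘L A := by rw [ContinuousLinearMap.comp_assoc]
  have hadj : adjoint (a • (S ∘L T) + b • (T ∘L S)) =
      a • adjoint (S ∘L T) + b • adjoint (T ∘L S) := by
    rw [← ContinuousLinearMap.star_eq_adjoint, ← ContinuousLinearMap.star_eq_adjoint,
      ← ContinuousLinearMap.star_eq_adjoint, star_add, star_smul, star_smul,
      star_trivial (a : ℝ), star_trivial (b : ℝ)]
  rw [hadj]
  ext v
  simp only [ContinuousLinearMap.comp_apply, ContinuousLinearMap.add_apply,
    ContinuousLinearMap.smul_apply, map_add, ContinuousLinearMap.map_smul_of_tower]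
  have h1 := congrArg (fun f : H →L[ℂ] H => f v) hST
  have h2 := congrArg (fun f : H →L[ℂ] H => f v) hTS
  simp only [ContinuousLinearMap.comp_apply] at h1 h2
  rw [h1, h2]

/-- Core estimate. -/
lemma core (hA : A.IsPositive) (hT : IsAAdjoint A T S)
    {a b : ℝ} (ha : 0 ≤ a) (hb : 0 ≤ b) :
    0 ≤ opNormA A (a • (S ∘L T) + b • (T ∘L S)) ∧
    ∀ x : H, aNorm A x = 1 →
      a * aNorm A (T x) ^ 2 + b * aNorm A (S x) ^ 2 ≤
        opNormA A (a • (S ∘L T) + b • (T ∘L S)) := by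
  have hA0 : (0 : H →L[ℂ] H) ≤ A := (ContinuousLinearMap.nonneg_iff_isPositive A).mpr hA
  set B := CFC.sqrt A with hB
  have hBB : B ∘L B = A := CFC.sqrt_mul_sqrt_self A hA0
  have hBsa : IsSelfAdjoint B := IsSelfAdjoint.of_nonneg (CFC.sqrt_nonneg A)
  have hAsa : IsSelfAdjoint A := hA.isSelfAdjoint
  set R := a • (S ∘L T) + b • (T ∘L S) with hRdef
  have hAR : A ∘L R = adjoint R ∘L A := hAR_comp hA hT a b
  set Sset := {r | ∃ x ∈ closure (Set.range A), aNorm A x = 1 ∧ r = aNorm A (R x)} with hSset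
  have hbdd : BddAbove Sset := by
    refine ⟨‖R‖, ?_⟩
    rintro r ⟨x, hxmem, hx1, rfl⟩
    rw [aNorm_eq hBsa hBB] at hx1 ⊢
    calc ‖B (R x)‖ ≤ ‖R‖ * ‖B x‖ := normBound hBsa hBB hAR x
      _ = ‖R‖ := by rw [hx1, mul_one]
  have hN0 : 0 ≤ opNormA A R := by
    apply Real.sSup_nonneg
    rintro r ⟨x, _, _, rfl⟩
    exact Real.sqrt_nonneg _
  refine ⟨hN0, fun x hx => ?_⟩
  have hBx : ‖B x‖ = 1 := by rw [← aNorm_eq hBsa hBB, hx]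
  -- projection onto the closure of the range of A
  set K := (LinearMap.range (A : H →ₗ[ℂ] H)).topologicalClosure with hK
  haveI : CompleteSpace K := (LinearMap.range (A : H →ₗ[ℂ] H)).isClosed_topologicalClosure.completeSpace_coe
  set p := K.starProjection x with hp
  have hzorth : x - p ∈ Kᗮ := Submodule.sub_starProjection_mem_orthogonal (K := K) x
  have hmemK : ∀ u : H, A u ∈ K := fun u =>
    Submodule.le_topologicalClosure _ (LinearMap.mem_range_self (A : H →ₗ[ℂ] H) u)
  have hAz : A (x - p) = 0 := by
    have h0 : (inner ℂ (A (x - p)) (A (x - p)) : ℂ) = 0 := by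
      rw [← sa_inner hAsa (A (x - p)) (x - p)]
      exact (Submodule.mem_orthogonal K (x - p)).mp hzorth _ (hmemK _)
    exact inner_self_eq_zero.mp h0
  have hBz : B (x - p) = 0 := by
    have h0 : (inner ℂ (B (x - p)) (B (x - p)) : ℂ) = 0 := by
      rw [← bsq_inner hBsa hBB, hAz, inner_zero_left]
    exact inner_self_eq_zero.mp h0
  have hARz : A (R (x - p)) = 0 := by
    have := congrArg (fun f : H →L[ℂ] H => f (x - p)) hAR
    simp only [ContinuousLinearMap.comp_apply] at this
    rw [this, hAz, map_zero]
  have hBRz : B (R (x - p)) = 0 := by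
    have h0 : (inner ℂ (B (R (x - p))) (B (R (x - p)))  : ℂ) = 0 := by
      rw [← bsq_inner hBsa hBB, hARz, inner_zero_left]
    exact inner_self_eq_zero.mp h0
  have hxsplit : x = p + (x - p) := by abel
  have hBp : B p = B x := by
    conv_rhs => rw [hxsplit]
    rw [map_add, hBz, add_zero]
  have hBRp : B (R p) = B (R x) := by
    conv_rhs => rw [hxsplit]
    rw [map_add, map_add, hBRz, add_zero]
  have hmem : aNorm A (R x) ∈ Sset := by
    refine ⟨p, ?_, ?_, ?_⟩
    · have h1 : p ∈ (K : Set H) := Submodule.coe_mem _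
      have h2 : (K : Set H) = closure (Set.range ⇑A) := by
        rw [hK, Submodule.topologicalClosure_coe, LinearMap.coe_range]; rfl
      rwa [h2] at h1

    · rw [aNorm_eq hBsa hBB, hBp, hBx]
    · rw [aNorm_eq hBsa hBB, aNorm_eq hBsa hBB, hBRp]
  have hle : aNorm A (R x) ≤ opNormA A R := le_csSup hbdd hmem
  -- the inner product computation
  have hRx : R x = a • (S (T x)) + b • (T (S x)) := by
    simp [hRdef, ContinuousLinearMap.add_apply, ContinuousLinearMap.smul_apply,
      ContinuousLinearMap.comp_apply]
  have hsplit : (inner ℂ (A (R x)) x : ℂ) =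
      (a : ℂ) * inner ℂ (A (S (T x))) x + (b : ℂ) * inner ℂ (A (T (S x))) x := by
    rw [hRx, map_add, ContinuousLinearMap.map_smul_of_tower, ContinuousLinearMap.map_smul_of_tower,
      inner_add_left, inner_real_smul_left', inner_real_smul_left']
  have hterm1 : (inner ℂ (A (S (T x))) x : ℂ) = inner ℂ (A (T x)) (T x) := by
    rw [hAS_pt hT, ContinuousLinearMap.adjoint_inner_left]
  have hterm2 : (inner ℂ (A (T (S x))) x : ℂ).re = ‖B (S x)‖ ^ 2 := by
    have e1 : (inner ℂ (A (T (S x))) x : ℂ) = (starRingEnd ℂ) (inner ℂ (A x) (T (S x))) := by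
      rw [sa_inner hAsa, ← inner_conj_symm]
    have e2 : (inner ℂ (A x) (T (S x)) : ℂ) = inner ℂ (A (S x)) (S x) := by
      rw [hAS_pt hT, ContinuousLinearMap.adjoint_inner_left]
    rw [e1, e2, Complex.conj_re, norm_B_sq hBsa hBB]
  have hre : (inner ℂ (A (R x)) x : ℂ).re = a * ‖B (T x)‖ ^ 2 + b * ‖B (S x)‖ ^ 2 := by
    rw [hsplit]
    simp only [Complex.add_re, re_ofReal_mul']
    rw [hterm1, hterm2, norm_B_sq hBsa hBB (T x)]
  have hchain : a * ‖B (T x)‖ ^ 2 + b * ‖B (S x)‖ ^ 2 ≤ aNorm A (R x) := by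
    rw [← hre]
    calc (inner ℂ (A (R x)) x : ℂ).re ≤ ‖(inner ℂ (A (R x)) x : ℂ)‖ := Complex.re_le_norm _
      _ = ‖(inner ℂ (B (R x)) (B x) : ℂ)‖ := by rw [bsq_inner hBsa hBB]
      _ ≤ ‖B (R x)‖ * ‖B x‖ := norm_inner_le_norm _ _
      _ = aNorm A (R x) := by rw [hBx, mul_one, aNorm_eq hBsa hBB]
  rw [aNorm_eq hBsa hBB (T x), aNorm_eq hBsa hBB (S x)]
  exact hchain.trans hle

/-- The numerical-radius-type bounds. -/
lemma absBound (hA : A.IsPositive) (hT : IsAAdjoint A T S) (x : H) (hx : aNorm A x = 1) :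
    ‖aInner A (T x) x‖ ≤ aNorm A (T x) ∧
    ‖aInner A (T x) x‖ ≤ aNorm A (S x) := by
  have hA0 : (0 : H →L[ℂ] H) ≤ A := (ContinuousLinearMap.nonneg_iff_isPositive A).mpr hA
  set B := CFC.sqrt A with hB
  have hBB : B ∘L B = A := CFC.sqrt_mul_sqrt_self A hA0
  have hBsa : IsSelfAdjoint B := IsSelfAdjoint.of_nonneg (CFC.sqrt_nonneg A)
  have hAsa : IsSelfAdjoint A := hA.isSelfAdjoint
  have hBx : ‖B x‖ = 1 := by rw [← aNorm_eq hBsa hBB, hx]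
  constructor
  · rw [aInner, aNorm_eq hBsa hBB, bsq_inner hBsa hBB]
    calc ‖(inner ℂ (B (T x)) (B x) : ℂ)‖ ≤ ‖B (T x)‖ * ‖B x‖ := norm_inner_le_norm _ _
      _ = ‖B (T x)‖ := by rw [hBx, mul_one]
  · have e1 : (aInner A (T x) x : ℂ) = (starRingEnd ℂ) (inner ℂ (A (S x)) x) := by
      rw [aInner, sa_inner hAsa, ← inner_conj_symm]
      congr 1
      rw [hAS_pt hT, ContinuousLinearMap.adjoint_inner_left]
    rw [e1, Complex.norm_conj, bsq_inner hBsa hBB,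
      aNorm_eq hBsa hBB]
    calc ‖(inner ℂ (B (S x)) (B x) : ℂ)‖ ≤ ‖B (S x)‖ * ‖B x‖ := norm_inner_le_norm _ _
      _ = ‖B (S x)‖ := by rw [hBx, mul_one]

end Main


theorem stmt19 (A T S : H →L[ℂ] H) (hA : A.IsPositive) (hT : IsAAdjoint A T S)
    (α : ℝ) (hα : α ∈ Set.Icc (0:ℝ) 1) :
    alphaNorm A T α ^ 2 ≤ opNormA A ((1 - α) • (S ∘L T) + α • (T ∘L S)) ∧
    wA A T ^ 2 ≤
      sInf {r | ∃ β ∈ Set.Icc (0:ℝ) 1,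
        r = opNormA A (β • (S ∘L T) + (1 - β) • (T ∘L S))} := by
  obtain ⟨hα0, hα1⟩ := hα
  constructor
  · -- part 1
    obtain ⟨hN0, hcore⟩ := core hA hT (a := 1 - α) (b := α) (by linarith) hα0
    set c := opNormA A ((1 - α) • (S ∘L T) + α • (T ∘L S)) with hc
    have hsup : alphaNorm A T α ≤ Real.sqrt c := by
      apply Real.sSup_le _ (Real.sqrt_nonneg _)
      rintro r ⟨x, hx, rfl⟩
      apply Real.sqrt_le_sqrt
      have habs := (absBound hA hT x hx).2
      have h2 : ‖aInner A (T x) x‖ ^ 2 ≤ aNorm A (S x) ^ 2 :=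
        pow_le_pow_left₀ (norm_nonneg _) habs 2
      have := hcore x hx
      nlinarith
    have h0 : 0 ≤ alphaNorm A T α := by
      apply Real.sSup_nonneg
      rintro r ⟨x, _, rfl⟩
      exact Real.sqrt_nonneg _
    calc alphaNorm A T α ^ 2 ≤ Real.sqrt c ^ 2 := pow_le_pow_left₀ h0 hsup 2
      _ = c := Real.sq_sqrt hN0
  · -- part 2
    apply le_csInf
    · exact ⟨opNormA A ((0:ℝ) • (S ∘L T) + (1 - (0:ℝ)) • (T ∘L S)),
        ⟨0, by norm_num, rfl⟩⟩
    rintro r ⟨β, ⟨hβ0, hβ1⟩, rfl⟩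
    obtain ⟨hN0, hcore⟩ := core hA hT (a := β) (b := 1 - β) hβ0 (by linarith)
    have hsup : wA A T ≤ Real.sqrt (opNormA A (β • (S ∘L T) + (1 - β) • (T ∘L S))) := by
      apply Real.sSup_le _ (Real.sqrt_nonneg _)
      rintro r ⟨x, hx, rfl⟩
      rw [Real.le_sqrt (norm_nonneg _) hN0]
      obtain ⟨habsT, habsS⟩ := absBound hA hT x hx
      have h2T : ‖aInner A (T x) x‖ ^ 2 ≤ aNorm A (T x) ^ 2 :=
        pow_le_pow_left₀ (norm_nonneg _) habsT 2
      have h2S : ‖aInner A (T x) x‖ ^ 2 ≤ aNorm A (S x) ^ 2 :=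
        pow_le_pow_left₀ (norm_nonneg _) habsS 2
      have := hcore x hx
      nlinarith
    have h0 : 0 ≤ wA A T := by
      apply Real.sSup_nonneg
      rintro r ⟨x, _, rfl⟩
      exact norm_nonneg _
    calc wA A T ^ 2 ≤ Real.sqrt (opNormA A (β • (S ∘L T) + (1 - β) • (T ∘L S))) ^ 2 :=
          pow_le_pow_left₀ h0 hsup 2
      _ = _ := Real.sq_sqrt hN0
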